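/- Let (M, S, η) be a factorable monoid such that (ημ)_{2121}(r,s,t) = (ημ)_{212}(r,s,t) holds for all (r,s,t) ∈ (S∖{1})³. Then for all s ∈ S∖{1} and f ∈ M, the equalities (sf)′ = (s·f′)′ and \overline{sf} = \overline{s·f′} · f̄ hold. -/
import Mathlib


/-- Apply `F` to the first two components of a triple. -/
def app1 {X : Type*} (F : X × X → X × X) : X × X × X → X × X × X :=
  fun x => ((F (x.1, x.2.1)).1, (F (x.1, x.2.1)).2, x.2.2)

/-- Apply `F` to the last two components of a triple. -/
def app2 {X : Type*} (F : X × X → X × X) : X × X × X → X × X × X :=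
  fun x => (x.1, (F (x.2.1, x.2.2)).1, (F (x.2.1, x.2.2)).2)

/-- `F_{212}`, i.e. `F₂ F₁ F₂` (position 2 applied first). -/
def C212 {X : Type*} (F : X × X → X × X) : X × X × X → X × X × X :=
  app2 F ∘ app1 F ∘ app2 F

/-- `F_{2121}`, i.e. `F₁ F₂ F₁ F₂` (position 2 applied first). -/
def C2121 {X : Type*} (F : X × X → X × X) : X × X × X → X × X × X :=
  app1 F ∘ C212 F

/-- `F_{1212}`, i.e. `F₂ F₁ F₂ F₁` (position 1 applied first). -/
def C1212 {X : Type*} (F : X × X → X × X) : X × X × X → X × X × X :=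
  C212 F ∘ app1 F

/-- The minimal length of an `S`-word representing `f`. -/
noncomputable def lenS {M : Type*} [Monoid M] (S : Set M) (f : M) : ℕ :=
  sInf {n | ∃ l : List M, l.length = n ∧ (∀ x ∈ l, x ∈ S) ∧ l.prod = f}

/-- The sum of the lengths of the components of a triple. -/
noncomputable def tripLen {M : Type*} [Monoid M] (S : Set M) (x : M × M × M) : ℕ :=
  lenS S x.1 + lenS S x.2.1 + lenS S x.2.2

/-- A factorability structure `η` on a monoid `M` with generating subset `S`
(containing `1`): `η = (η', η̄)` is a factorisation map such that, for
`F = η ∘ μ`, on every triple the maps `F₁F₂F₁F₂`, `F₂F₁F₂`, `F₂F₁F₂F₁`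
coincide or each reduces the total length. -/
structure Factorability {M : Type*} [Monoid M] (S : Set M) (eta : M → M × M) : Prop where
  gen : ∀ f : M, ∃ l : List M, (∀ x ∈ l, x ∈ S) ∧ l.prod = f
  one_mem : (1 : M) ∈ S
  eta_one : eta 1 = (1, 1)
  head_mem : ∀ f : M, f ≠ 1 → (eta f).1 ∈ S ∧ (eta f).1 ≠ 1
  split : ∀ f : M, f ≠ 1 → (eta f).1 * (eta f).2 = f
  geodesic : ∀ f : M, f ≠ 1 → lenS S f = lenS S (eta f).1 + lenS S (eta f).2
  axm : ∀ x : M × M × M,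
    (C2121 (fun p : M × M => eta (p.1 * p.2)) x = C212 (fun p : M × M => eta (p.1 * p.2)) x ∧
      C1212 (fun p : M × M => eta (p.1 * p.2)) x = C212 (fun p : M × M => eta (p.1 * p.2)) x) ∨
    (tripLen S (C2121 (fun p : M × M => eta (p.1 * p.2)) x) < tripLen S x ∧
      tripLen S (C212 (fun p : M × M => eta (p.1 * p.2)) x) < tripLen S x ∧
      tripLen S (C1212 (fun p : M × M => eta (p.1 * p.2)) x) < tripLen S x)


section FactorabilityAux

variable {M : Type*} [Monoid M] {S : Set M} {eta : M → M × M}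

private lemma prod_ext' {p : M × M} {a b : M} (h1 : p.1 = a) (h2 : p.2 = b) : p = (a, b) := by
  rw [← h1, ← h2]

private lemma lenS_exists (hfac : Factorability S eta) (f : M) :
    ∃ l : List M, l.length = lenS S f ∧ (∀ x ∈ l, x ∈ S) ∧ l.prod = f := by
  have hne : {n : ℕ | ∃ l : List M, l.length = n ∧ (∀ x ∈ l, x ∈ S) ∧ l.prod = f}.Nonempty := by
    obtain ⟨l, hl, hp⟩ := hfac.gen f
    exact ⟨l.length, l, rfl, hl, hp⟩
  exact Nat.sInf_mem hne

private lemma lenS_one (S : Set M) : lenS S (1 : M) = 0 := by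
  have h0 : (0 : ℕ) ∈ {n : ℕ | ∃ l : List M, l.length = n ∧ (∀ x ∈ l, x ∈ S) ∧ l.prod = 1} :=
    ⟨[], rfl, by simp, by simp⟩
  exact Nat.le_zero.mp (Nat.sInf_le h0)

private lemma eq_one_of_lenS_eq_zero (hfac : Factorability S eta) {f : M}
    (h : lenS S f = 0) : f = 1 := by
  obtain ⟨l, h1, _, h3⟩ := lenS_exists hfac f
  rw [h] at h1
  have hl : l = [] := List.length_eq_zero_iff.mp h1
  subst hl
  simpa using h3.symm

private lemma lenS_le_one {g : M} (hg : g ∈ S) : lenS S g ≤ 1 :=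
  Nat.sInf_le ⟨[g], rfl, by intro x hx; rw [List.mem_singleton] at hx; exact hx ▸ hg, by simp⟩

private lemma lenS_gen (hfac : Factorability S eta) {g : M} (hg : g ∈ S) (hg1 : g ≠ 1) :
    lenS S g = 1 := by
  have h1 := lenS_le_one hg
  have h2 : lenS S g ≠ 0 := fun h0 => hg1 (eq_one_of_lenS_eq_zero hfac h0)
  omega

private lemma mem_of_lenS_le_one (hfac : Factorability S eta) {u : M}
    (hu : lenS S u ≤ 1) : u ∈ S := by
  obtain ⟨l, h1, h2, h3⟩ := lenS_exists hfac u
  rcases l with _ | ⟨a, _ | ⟨b, l''⟩⟩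
  · have : u = 1 := by simpa using h3.symm
    rw [this]; exact hfac.one_mem
  · have : a = u := by simpa using h3
    exact this ▸ h2 a (by simp)
  · exfalso
    simp only [List.length_cons] at h1
    omega

private lemma lenS_mul_le (hfac : Factorability S eta) (a b : M) :
    lenS S (a * b) ≤ lenS S a + lenS S b := by
  obtain ⟨la, ha1, ha2, ha3⟩ := lenS_exists hfac a
  obtain ⟨lb, hb1, hb2, hb3⟩ := lenS_exists hfac b
  have hmem : lenS S a + lenS S b ∈
      {n : ℕ | ∃ l : List M, l.length = n ∧ (∀ x ∈ l, x ∈ S) ∧ l.prod = a * b} := by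
    refine ⟨la ++ lb, ?_, ?_, ?_⟩
    · rw [List.length_append, ha1, hb1]
    · intro x hx
      rcases List.mem_append.mp hx with hx' | hx'
      exacts [ha2 x hx', hb2 x hx']
    · rw [List.prod_append, ha3, hb3]
  exact Nat.sInf_le hmem

private lemma split' (hfac : Factorability S eta) (f : M) : (eta f).1 * (eta f).2 = f := by
  by_cases hf : f = 1
  · subst hf; rw [hfac.eta_one]; exact one_mul 1
  · exact hfac.split f hf

private lemma eta_gen (hfac : Factorability S eta) {g : M} (hg : g ∈ S) (hg1 : g ≠ 1) :
    eta g = (g, 1) := by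
  have hgeo := hfac.geodesic g hg1
  have hhd := hfac.head_mem g hg1
  have h1 : lenS S g = 1 := lenS_gen hfac hg hg1
  have h2 : lenS S (eta g).1 = 1 := lenS_gen hfac hhd.1 hhd.2
  have h3 : lenS S (eta g).2 = 0 := by omega
  have h4 : (eta g).2 = 1 := eq_one_of_lenS_eq_zero hfac h3
  have h5 := hfac.split g hg1
  rw [h4, mul_one] at h5
  exact prod_ext' h5 h4

/-- Adjacent letters of the η-normal form are stable:
`η(x' · (x̄)') = (x', (x̄)')`. Obtained from the factorability axiom at `(x,1,1)`,
whose length-reduction branch is impossible by geodesy. -/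
private lemma nf_stable (hfac : Factorability S eta) (x : M) :
    eta ((eta x).1 * (eta ((eta x).2)).1) = ((eta x).1, (eta ((eta x).2)).1) := by
  have hC : C212 (fun p : M × M => eta (p.1 * p.2)) (x, 1, 1)
      = ((eta x).1, (eta ((eta x).2)).1, (eta ((eta x).2)).2) := by
    simp only [C212, Function.comp_apply, app2, app1, mul_one, one_mul, hfac.eta_one]
  have hC2 : C2121 (fun p : M × M => eta (p.1 * p.2)) (x, 1, 1)
      = ((eta ((eta x).1 * (eta ((eta x).2)).1)).1,
         (eta ((eta x).1 * (eta ((eta x).2)).1)).2, (eta ((eta x).2)).2) := by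
    simp only [C2121, Function.comp_apply, hC, app1]
  rcases hfac.axm (x, 1, 1) with ⟨h1, _⟩ | ⟨_, h2, _⟩
  · rw [hC2, hC] at h1
    injection h1 with e1 e23
    injection e23 with e2 e3
    exact prod_ext' e1 e2
  · exfalso
    rw [hC] at h2
    simp only [tripLen] at h2
    have hl1 : lenS S (1 : M) = 0 := lenS_one S
    by_cases hx : x = 1
    · subst hx
      simp only [hfac.eta_one, hl1] at h2
      omega
    · have g1 := hfac.geodesic x hx
      by_cases hx2 : (eta x).2 = 1
      · rw [hx2] at g1
        simp only [hx2, hfac.eta_one, hl1] at h2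
        omega
      · have g2 := hfac.geodesic _ hx2
        omega

/-- If `(s, f')` is η-stable, then `η(sf) = (s, f)`.
Obtained from the factorability axiom at `(s, f, 1)` together with `nf_stable`. -/
private lemma key_lemma (hfac : Factorability S eta) {s f : M} (hf1 : f ≠ 1)
    (hst : eta (s * (eta f).1) = (s, (eta f).1)) : eta (s * f) = (s, f) := by
  have hC : C212 (fun p : M × M => eta (p.1 * p.2)) (s, f, 1) = (s, (eta f).1, (eta f).2) := by
    simp only [C212, Function.comp_apply, app2, app1, mul_one, hst, hfac.split f hf1]
  have hC1212 : C1212 (fun p : M × M => eta (p.1 * p.2)) (s, f, 1)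
      = ((eta (s * f)).1, (eta ((eta (s * f)).2)).1, (eta ((eta (s * f)).2)).2) := by
    simp only [C1212, C212, Function.comp_apply, app1, app2, mul_one,
      nf_stable hfac (s * f), split' hfac ((eta (s * f)).2)]
  rcases hfac.axm (s, f, 1) with ⟨_, h1⟩ | ⟨_, h2, _⟩
  · rw [hC1212, hC] at h1
    injection h1 with e1 e23
    injection e23 with e2 e3
    have e4 : (eta (s * f)).2 = f := by
      have h5 := split' hfac ((eta (s * f)).2)
      rw [e2, e3, hfac.split f hf1] at h5
      exact h5.symm
    exact prod_ext' e1 e4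
  · exfalso
    rw [hC] at h2
    simp only [tripLen] at h2
    have g1 := hfac.geodesic f hf1
    have hl1 : lenS S (1 : M) = 0 := lenS_one S
    omega

end FactorabilityAux

/-- if `(M, S, η)` is a factorable monoid such that
`(ημ)_{2121} = (ημ)_{212}` on `(S∖{1})³`, then for all `s ∈ S∖{1}` and `f ∈ M`,
`(sf)' = (s·f')'` and `overline{sf} = overline{s·f'} · f̄`. -/
theorem stable212_implies_strong_conditions {M : Type*} [Monoid M] (S : Set M)
    (eta : M → M × M) (hfac : Factorability S eta)
    (h : ∀ r s t : M, r ∈ S → s ∈ S → t ∈ S → r ≠ 1 → s ≠ 1 → t ≠ 1 →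
      C2121 (fun p : M × M => eta (p.1 * p.2)) (r, s, t) =
        C212 (fun p : M × M => eta (p.1 * p.2)) (r, s, t)) :
    ∀ s : M, s ∈ S → s ≠ 1 → ∀ f : M,
      (eta (s * f)).1 = (eta (s * (eta f).1)).1 ∧
      (eta (s * f)).2 = (eta (s * (eta f).1)).2 * (eta f).2 := by
  intro s hs hs1 f
  suffices H : ∀ n : ℕ, ∀ g : M, lenS S g ≤ n → ∀ t : M, t ∈ S → t ≠ 1 →
      (eta (t * g)).1 = (eta (t * (eta g).1)).1 ∧
      (eta (t * g)).2 = (eta (t * (eta g).1)).2 * (eta g).2 by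
    exact H (lenS S f) f le_rfl s hs hs1
  intro n
  induction n with
  | zero =>
    intro g hg0 t ht ht1
    have hg1 : g = 1 := eq_one_of_lenS_eq_zero hfac (Nat.le_zero.mp hg0)
    subst hg1
    constructor <;> simp [hfac.eta_one]
  | succ n IH =>
    intro g hgle t ht ht1
    by_cases hg1 : g = 1
    · subst hg1
      constructor <;> simp [hfac.eta_one]
    by_cases hgb : (eta g).2 = 1
    · have hff : (eta g).1 = g := by
        have hsp := hfac.split g hg1
        rwa [hgb, mul_one] at hsp
      rw [hff, hgb, mul_one]
      exact ⟨rfl, rfl⟩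
    -- main case: g ≠ 1 and (eta g).2 ≠ 1
    have hg' := hfac.head_mem g hg1
    have hgb' := hfac.head_mem ((eta g).2) hgb
    -- t * (eta g).1 ≠ 1
    have htg' : t * (eta g).1 ≠ 1 := by
      intro h0
      have h1 := h t (eta g).1 (eta ((eta g).2)).1 ht hg'.1 hgb'.1 ht1 hg'.2 hgb'.2
      have hC : C212 (fun p : M × M => eta (p.1 * p.2)) (t, (eta g).1, (eta ((eta g).2)).1)
          = (1, (eta ((eta g).2)).1, 1) := by
        simp only [C212, Function.comp_apply, app2, app1, nf_stable hfac g, h0,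
          hfac.eta_one, one_mul, eta_gen hfac hgb'.1 hgb'.2]
      have hC2 : C2121 (fun p : M × M => eta (p.1 * p.2)) (t, (eta g).1, (eta ((eta g).2)).1)
          = ((eta ((eta g).2)).1, 1, 1) := by
        simp only [C2121, Function.comp_apply, hC, app1, one_mul,
          eta_gen hfac hgb'.1 hgb'.2]
      rw [hC, hC2] at h1
      injection h1 with e1 e23
      exact hgb'.2 e1
    have hc := hfac.head_mem _ htg'
    -- the C212 computation for the generator triple (t, g', ḡ')
    have h1 := h t (eta g).1 (eta ((eta g).2)).1 ht hg'.1 hgb'.1 ht1 hg'.2 hgb'.2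
    have hC : C212 (fun p : M × M => eta (p.1 * p.2)) (t, (eta g).1, (eta ((eta g).2)).1)
        = ((eta (t * (eta g).1)).1,
           (eta ((eta (t * (eta g).1)).2 * (eta ((eta g).2)).1)).1,
           (eta ((eta (t * (eta g).1)).2 * (eta ((eta g).2)).1)).2) := by
      simp only [C212, Function.comp_apply, app2, app1, nf_stable hfac g]
    have hC2 : C2121 (fun p : M × M => eta (p.1 * p.2)) (t, (eta g).1, (eta ((eta g).2)).1)
        = ((eta ((eta (t * (eta g).1)).1 *
              (eta ((eta (t * (eta g).1)).2 * (eta ((eta g).2)).1)).1)).1,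
           (eta ((eta (t * (eta g).1)).1 *
              (eta ((eta (t * (eta g).1)).2 * (eta ((eta g).2)).1)).1)).2,
           (eta ((eta (t * (eta g).1)).2 * (eta ((eta g).2)).1)).2) := by
      simp only [C2121, Function.comp_apply, hC, app1]
    rw [hC2, hC] at h1
    have hI : eta ((eta (t * (eta g).1)).1 *
        (eta ((eta (t * (eta g).1)).2 * (eta ((eta g).2)).1)).1)
        = ((eta (t * (eta g).1)).1, (eta ((eta (t * (eta g).1)).2 * (eta ((eta g).2)).1)).1) := by
      injection h1 with e1 e23
      injection e23 with e2 e3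
      exact prod_ext' e1 e2
    -- heads agree: (η(u·ḡ))' = (η(u·ḡ'))'
    have hw : (eta ((eta (t * (eta g).1)).2 * (eta g).2)).1
        = (eta ((eta (t * (eta g).1)).2 * (eta ((eta g).2)).1)).1 := by
      by_cases hu1 : (eta (t * (eta g).1)).2 = 1
      · rw [hu1, one_mul, one_mul, eta_gen hfac hgb'.1 hgb'.2]
      · have hulen : lenS S (eta (t * (eta g).1)).2 ≤ 1 := by
          have hgeo := hfac.geodesic _ htg'
          have hmul := lenS_mul_le hfac t (eta g).1
          have hlt : lenS S t = 1 := lenS_gen hfac ht ht1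
          have hlg : lenS S (eta g).1 = 1 := lenS_gen hfac hg'.1 hg'.2
          have hlc : lenS S (eta (t * (eta g).1)).1 = 1 := lenS_gen hfac hc.1 hc.2
          omega
        have hu : (eta (t * (eta g).1)).2 ∈ S := mem_of_lenS_le_one hfac hulen
        have hlen2 : lenS S (eta g).2 ≤ n := by
          have hgeo := hfac.geodesic g hg1
          have hlg : lenS S (eta g).1 = 1 := lenS_gen hfac hg'.1 hg'.2
          omega
        exact (IH (eta g).2 hlen2 (eta (t * (eta g).1)).2 hu hu1).1
    rw [← hw] at hI
    -- the product identity t * g = c * (u * ḡ)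
    have hprod : t * g = (eta (t * (eta g).1)).1 *
        ((eta (t * (eta g).1)).2 * (eta g).2) := by
      conv_lhs => rw [← hfac.split g hg1, ← mul_assoc, ← hfac.split _ htg']
      exact mul_assoc _ _ _
    by_cases huf : (eta (t * (eta g).1)).2 * (eta g).2 = 1
    · have htgc : t * g = (eta (t * (eta g).1)).1 := by rw [hprod, huf, mul_one]
      rw [htgc, eta_gen hfac hc.1 hc.2]
      exact ⟨rfl, huf.symm⟩
    · have hkey := key_lemma hfac huf hI
      constructor
      · rw [hprod, hkey]
      · rw [hprod, hkey]
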